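/- If f : ℝⁿ → ℝ is Lipschitz with constant L and D is a closed Euclidean ball of radius r > 0 centered at the origin, then the derivative map x ↦ fderiv φ_D (x) is Lipschitz, i.e. there exists a constant K ≥ 0 such that ‖fderiv φ_D (x₁) − fderiv φ_D (x₂)‖ ≤ K ‖x₁ − x₂‖ for all x₁, x₂. -/

import Mathlib

open MeasureTheory
open scoped NNReal

/-- The Steklov-type average of `f` over `D`. -/
noncomputable def steklovAvg (n : ℕ) (D : Set (EuclideanSpace ℝ (Fin n)))
    (f : EuclideanSpace ℝ (Fin n) → ℝ) (x : EuclideanSpace ℝ (Fin n)) : ℝ :=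
  (volume D).toReal⁻¹ • ∫ y in D, f (x + y)

section Aux

open Metric Filter
open scoped Topology

variable {n : ℕ} {r : ℝ} {f : EuclideanSpace ℝ (Fin n) → ℝ} {L : ℝ≥0}

local notation "E" => EuclideanSpace ℝ (Fin n)

lemma steklov_g_int (hf : LipschitzWith L f) {s : Set E} (hs : volume s ≠ ⊤) :
    IntegrableOn (fderiv ℝ f) s volume := by
  refine Integrable.mono' (g := fun _ => (L : ℝ))
    (integrableOn_const hs) ?_ ?_
  · exact (measurable_fderiv ℝ f).aestronglyMeasurable.restrict
  · exact .of_forall fun y => norm_fderiv_le_of_lipschitz ℝ hf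

lemma steklov_g_comp_int (hf : LipschitzWith L f) (x : E) :
    IntegrableOn (fun y => fderiv ℝ f (x + y)) (closedBall (0:E) r) volume := by
  refine Integrable.mono' (g := fun _ => (L : ℝ))
    (integrableOn_const measure_closedBall_lt_top.ne) ?_ ?_
  · exact ((measurable_fderiv ℝ f).comp (measurable_const_add x)).aestronglyMeasurable.restrict
  · exact .of_forall fun y => norm_fderiv_le_of_lipschitz ℝ hf

lemma steklov_f_comp_int (hf : LipschitzWith L f) (x : E) :
    IntegrableOn (fun y => f (x + y)) (closedBall (0:E) r) volume :=
  ((hf.continuous.comp (continuous_add_left x)).continuousOn).integrableOn_compact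
    (isCompact_closedBall _ _)

lemma steklov_ae_diff_translate (hf : LipschitzWith L f) (x : E) :
    ∀ᵐ y : E ∂volume, DifferentiableAt ℝ f (x + y) :=
  (measurePreserving_add_left volume x).quasiMeasurePreserving.ae hf.ae_differentiableAt

lemma steklov_shift_integral (hf : LipschitzWith L f) (hr : 0 < r) (x : E) :
    ∫ y in closedBall (0:E) r, fderiv ℝ f (x + y) = ∫ z in closedBall x r, fderiv ℝ f z := by
  have hemb : MeasurableEmbedding (fun y : E => x + y) :=
    (MeasurableEquiv.addLeft x).measurableEmbedding
  have hmp : MeasurePreserving (fun y : E => x + y) volume volume :=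
    measurePreserving_add_left volume x
  have hpre : (fun y : E => x + y) ⁻¹' closedBall x r = closedBall (0:E) r := by
    ext y; simp [Metric.mem_closedBall, dist_eq_norm]
  rw [← hpre]
  exact hmp.setIntegral_preimage_emb hemb _ _

set_option maxHeartbeats 1000000 in
lemma steklov_hasFDerivAt (hf : LipschitzWith L f) (hr : 0 < r) (x : E) :
    HasFDerivAt (steklovAvg n (closedBall 0 r) f)
      ((volume (closedBall (0:E) r)).toReal⁻¹ • ∫ y in closedBall (0:E) r, fderiv ℝ f (x + y))
      x := by
  classical
  set D : Set E := closedBall 0 r with hD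
  set c : ℝ := (volume D).toReal with hc
  have hcpos : 0 < c := by
    refine ENNReal.toReal_pos ?_ measure_closedBall_lt_top.ne
    exact (measure_closedBall_pos volume (0:E) hr).ne'
  set g : E → (E →L[ℝ] ℝ) := fderiv ℝ f with hg
  set A : E →L[ℝ] ℝ := c⁻¹ • ∫ y in D, g (x + y) with hA
  rw [hasFDerivAt_iff_tendsto]
  have h2 : IntegrableOn (fun y => f (x + y)) D volume := steklov_f_comp_int hf x
  have h3 : IntegrableOn (fun y => g (x + y)) D volume := steklov_g_comp_int hf x
  -- key identity
  have key : ∀ x' : E, steklovAvg n D f x' - steklovAvg n D f x - A (x' - x)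
      = c⁻¹ * ∫ y in D, (f (x' + y) - f (x + y) - g (x + y) (x' - x)) := by
    intro x'
    have h1 : IntegrableOn (fun y => f (x' + y)) D volume := steklov_f_comp_int hf x'
    have h4 : IntegrableOn (fun y => g (x + y) (x' - x)) D volume :=
      h3.apply_continuousLinearMap _
    have happ : A (x' - x) = c⁻¹ * ∫ y in D, g (x + y) (x' - x) := by
      rw [hA, ContinuousLinearMap.smul_apply, ContinuousLinearMap.integral_apply h3]
      simp
    have e1 : ∫ y in D, (f (x' + y) - f (x + y) - g (x + y) (x' - x))
        = (∫ y in D, (f (x' + y) - f (x + y))) - ∫ y in D, g (x + y) (x' - x) :=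
      integral_sub (h1.sub h2) h4
    have e2 : ∫ y in D, (f (x' + y) - f (x + y))
        = (∫ y in D, f (x' + y)) - ∫ y in D, f (x + y) := integral_sub h1 h2
    rw [happ]
    simp only [steklovAvg, smul_eq_mul, e1, e2, ← hc]
    ring
  -- pointwise quotient functions
  set F : E → E → ℝ :=
    fun x' y => ‖x' - x‖⁻¹ * ‖f (x' + y) - f (x + y) - g (x + y) (x' - x)‖ with hF
  have Fmeas : ∀ x', AEStronglyMeasurable (F x') (volume.restrict D) := by
    intro x'
    have m1 : Measurable fun y : E => f (x' + y) :=
      hf.continuous.measurable.comp (measurable_const_add x')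
    have m2 : Measurable fun y : E => f (x + y) :=
      hf.continuous.measurable.comp (measurable_const_add x)
    have m3 : Measurable fun y : E => g (x + y) (x' - x) :=
      (measurable_fderiv_apply_const ℝ f (x' - x)).comp (measurable_const_add x)
    exact (measurable_const.mul ((m1.sub m2).sub m3).norm).aestronglyMeasurable.restrict
  have Fnonneg : ∀ x' y, 0 ≤ F x' y := fun x' y => by positivity
  have Fbound : ∀ x' y, F x' y ≤ 2 * L := by
    intro x' y
    rcases eq_or_ne x' x with h | hne
    · have hz : F x' y = 0 := by simp [hF, h]
      rw [hz]; positivity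
    · have hd : 0 < ‖x' - x‖ := by
        rw [norm_pos_iff, sub_ne_zero]; exact hne
      have hnum : ‖f (x' + y) - f (x + y) - g (x + y) (x' - x)‖
          ≤ 2 * L * ‖x' - x‖ := by
        have hl : ‖f (x' + y) - f (x + y)‖ ≤ L * ‖x' - x‖ := by
          have := hf.dist_le_mul (x' + y) (x + y)
          rw [dist_eq_norm, dist_eq_norm] at this
          simpa [add_sub_add_right_eq_sub] using this
        have hop : ‖g (x + y) (x' - x)‖ ≤ L * ‖x' - x‖ := by
          calc ‖g (x + y) (x' - x)‖ ≤ ‖g (x + y)‖ * ‖x' - x‖ :=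
                ContinuousLinearMap.le_opNorm _ _
          _ ≤ L * ‖x' - x‖ := by
                gcongr; exact norm_fderiv_le_of_lipschitz ℝ hf
        calc ‖f (x' + y) - f (x + y) - g (x + y) (x' - x)‖
            ≤ ‖f (x' + y) - f (x + y)‖ + ‖g (x + y) (x' - x)‖ := norm_sub_le _ _
        _ ≤ L * ‖x' - x‖ + L * ‖x' - x‖ := add_le_add hl hop
        _ = 2 * L * ‖x' - x‖ := by ring
      have hFe : F x' y = ‖x' - x‖⁻¹ * ‖f (x' + y) - f (x + y) - g (x + y) (x' - x)‖ := rfl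
      rw [hFe]
      calc ‖x' - x‖⁻¹ * ‖f (x' + y) - f (x + y) - g (x + y) (x' - x)‖
          ≤ ‖x' - x‖⁻¹ * (2 * L * ‖x' - x‖) :=
            mul_le_mul_of_nonneg_left hnum (by positivity)
      _ = 2 * L := by field_simp
  -- tendsto of the integral of F
  have htend : Tendsto (fun x' => ∫ y in D, F x' y) (𝓝 x) (𝓝 0) := by
    rw [tendsto_iff_seq_tendsto]
    intro u hu
    have h0 : (0:ℝ) = ∫ (_ : E) in D, (0:ℝ) := by simp
    rw [show (𝓝 (0:ℝ)) = 𝓝 (∫ (_ : E) in D, (0:ℝ)) by rw [← h0]]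
    refine tendsto_integral_of_dominated_convergence (fun _ => 2 * L)
      (fun k => Fmeas (u k)) ?_ ?_ ?_
    · exact integrableOn_const measure_closedBall_lt_top.ne
    · intro k
      exact .of_forall fun y => by
        rw [Real.norm_of_nonneg (Fnonneg _ _)]; exact Fbound _ _
    · have hae : ∀ᵐ y : E ∂volume.restrict D, DifferentiableAt ℝ f (x + y) :=
        ae_restrict_of_ae (steklov_ae_diff_translate hf x)
      filter_upwards [hae] with y hy
      have ht := hasFDerivAt_iff_tendsto.mp hy.hasFDerivAt
      have hz : Tendsto (fun k => u k + y) atTop (𝓝 (x + y)) := by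
        exact hu.add_const y
      have := ht.comp hz
      simp only [Function.comp_def] at this
      convert this using 2 with k
      simp [hF, add_sub_add_right_eq_sub, hg]
  -- squeeze
  have hmul : Tendsto (fun x' => c⁻¹ * ∫ y in D, F x' y) (𝓝 x) (𝓝 0) := by
    have := htend.const_mul c⁻¹
    simpa using this
  refine squeeze_zero (fun x' => by positivity) ?_ hmul
  intro x'
  have hnorm : ‖∫ y in D, (f (x' + y) - f (x + y) - g (x + y) (x' - x))‖
      ≤ ∫ y in D, ‖f (x' + y) - f (x + y) - g (x + y) (x' - x)‖ :=
    norm_integral_le_integral_norm _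
  have hFint : ∫ y in D, F x' y
      = ‖x' - x‖⁻¹ * ∫ y in D, ‖f (x' + y) - f (x + y) - g (x + y) (x' - x)‖ := by
    rw [hF, integral_const_mul]
  calc ‖x' - x‖⁻¹ * ‖steklovAvg n D f x' - steklovAvg n D f x - A (x' - x)‖
      = ‖x' - x‖⁻¹ * (c⁻¹ * ‖∫ y in D, (f (x' + y) - f (x + y) - g (x + y) (x' - x))‖) := by
        rw [key x', norm_mul, Real.norm_of_nonneg (by positivity : (0:ℝ) ≤ c⁻¹)]
  _ ≤ ‖x' - x‖⁻¹ * (c⁻¹ * ∫ y in D, ‖f (x' + y) - f (x + y) - g (x + y) (x' - x)‖) := by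
        gcongr
  _ = c⁻¹ * ∫ y in D, F x' y := by rw [hFint]; ring

lemma steklov_pow_aux (j : ℕ) {a b : ℝ} (hb : 0 ≤ b) (hab : b ≤ a) :
    a ^ (j + 1) - b ^ (j + 1) ≤ (j + 1 : ℝ) * a ^ j * (a - b) := by
  induction j with
  | zero => simp
  | succ k ih =>
    have ha : 0 ≤ a := hb.trans hab
    have hpow : b ^ (k + 1) ≤ a ^ (k + 1) := pow_le_pow_left₀ hb hab _
    have h1 : a ^ (k + 2) - b ^ (k + 2)
        = a * (a ^ (k + 1) - b ^ (k + 1)) + b ^ (k + 1) * (a - b) := by ring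
    have h2 : a * (a ^ (k + 1) - b ^ (k + 1)) ≤ a * ((k + 1 : ℝ) * a ^ k * (a - b)) := by
      apply mul_le_mul_of_nonneg_left ih ha
    have h3 : b ^ (k + 1) * (a - b) ≤ a ^ (k + 1) * (a - b) :=
      mul_le_mul_of_nonneg_right hpow (by linarith)
    have h4 : a * ((k + 1 : ℝ) * a ^ k * (a - b)) = (k + 1 : ℝ) * a ^ (k + 1) * (a - b) := by
      ring
    push_cast
    nlinarith [pow_nonneg ha k]

end Aux

set_option maxHeartbeats 1600000 in
/-- For a Lipschitz `f` and `D` a closed ball of radius `r > 0` centered at the origin,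
the derivative of the Steklov average is a Lipschitz map. -/
theorem steklov_average_fderiv_lipschitz (n : ℕ) (hn : 1 ≤ n) (r : ℝ) (hr : 0 < r)
    (f : EuclideanSpace ℝ (Fin n) → ℝ) (L : ℝ≥0) (hf : LipschitzWith L f) :
    ∃ K : ℝ, 0 ≤ K ∧ ∀ x₁ x₂ : EuclideanSpace ℝ (Fin n),
      ‖fderiv ℝ (steklovAvg n (Metric.closedBall 0 r) f) x₁ -
        fderiv ℝ (steklovAvg n (Metric.closedBall 0 r) f) x₂‖ ≤ K * ‖x₁ - x₂‖ := by
  classical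
  set D : Set (EuclideanSpace ℝ (Fin n)) := Metric.closedBall 0 r with hD
  set c : ℝ := (volume D).toReal with hc
  have hcfin : volume D ≠ ⊤ := measure_closedBall_lt_top.ne
  have hcpos : 0 < c := by
    refine ENNReal.toReal_pos ?_ hcfin
    exact (Metric.measure_closedBall_pos volume (0:EuclideanSpace ℝ (Fin n)) hr).ne'
  set g : EuclideanSpace ℝ (Fin n) → (EuclideanSpace ℝ (Fin n) →L[ℝ] ℝ) := fderiv ℝ f with hg
  have hderiv : ∀ x, fderiv ℝ (steklovAvg n D f) x
      = c⁻¹ • ∫ y in D, g (x + y) := fun x => (steklov_hasFDerivAt hf hr x).fderiv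
  set v : ℝ := (volume (Metric.closedBall (0:EuclideanSpace ℝ (Fin n)) 1)).toReal with hv
  have hcb : ∀ (x : EuclideanSpace ℝ (Fin n)) (s : ℝ), 0 ≤ s →
      (volume (Metric.closedBall x s)).toReal = s ^ n * v := by
    intro x s hs
    rw [Measure.addHaar_closedBall' volume x hs, ENNReal.toReal_mul,
      ENNReal.toReal_ofReal (by positivity), finrank_euclideanSpace_fin]
  set K : ℝ := max (2 * L / r) (2 * L / c * ((n : ℝ) * (2 * r) ^ (n - 1) * v)) with hK
  have hvnonneg : 0 ≤ v := ENNReal.toReal_nonneg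
  have hKnonneg : 0 ≤ K := le_trans (by positivity) (le_max_left _ _)
  refine ⟨K, hKnonneg, ?_⟩
  intro x₁ x₂
  set d : ℝ := ‖x₁ - x₂‖ with hd
  have hdnn : 0 ≤ d := norm_nonneg _
  -- shift
  have hint : ∀ x : EuclideanSpace ℝ (Fin n),
      ∫ y in D, g (x + y) = ∫ z in Metric.closedBall x r, g z := fun x =>
    steklov_shift_integral hf hr x
  set B₁ := Metric.closedBall x₁ r with hB₁
  set B₂ := Metric.closedBall x₂ r with hB₂
  have hdiff : fderiv ℝ (steklovAvg n D f) x₁ - fderiv ℝ (steklovAvg n D f) x₂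
      = c⁻¹ • ((∫ z in B₁, g z) - ∫ z in B₂, g z) := by
    rw [hderiv, hderiv, hint, hint, smul_sub]
  have hgbd : ∀ z, ‖g z‖ ≤ (L : ℝ) := fun z => norm_fderiv_le_of_lipschitz ℝ hf
  have hgmeas : AEStronglyMeasurable g volume :=
    (measurable_fderiv ℝ f).aestronglyMeasurable
  -- trivial bound
  have hAle : ∀ x : EuclideanSpace ℝ (Fin n),
      ‖fderiv ℝ (steklovAvg n D f) x‖ ≤ (L : ℝ) := by
    intro x
    rw [hderiv, hint]
    have h1 : ‖∫ z in Metric.closedBall x r, g z‖ ≤ (L : ℝ) * (volume (Metric.closedBall x r)).toReal :=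
      norm_setIntegral_le_of_norm_le_const measure_closedBall_lt_top
        (fun z _ => hgbd z)
    have hveq : (volume (Metric.closedBall x r)).toReal = c := by
      rw [hcb x r hr.le, hc, hD, hcb 0 r hr.le]
    rw [norm_smul, norm_inv, Real.norm_of_nonneg hcpos.le]
    calc c⁻¹ * ‖∫ z in Metric.closedBall x r, g z‖ ≤ c⁻¹ * ((L:ℝ) * c) := by
          rw [← hveq]; gcongr
    _ = L := by rw [mul_comm ((L:ℝ)) c, ← mul_assoc, inv_mul_cancel₀ hcpos.ne', one_mul]
  have htriv : ‖fderiv ℝ (steklovAvg n D f) x₁ - fderiv ℝ (steklovAvg n D f) x₂‖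
      ≤ 2 * L := by
    calc ‖fderiv ℝ (steklovAvg n D f) x₁ - fderiv ℝ (steklovAvg n D f) x₂‖
        ≤ ‖fderiv ℝ (steklovAvg n D f) x₁‖ + ‖fderiv ℝ (steklovAvg n D f) x₂‖ :=
          norm_sub_le _ _
    _ ≤ (L : ℝ) + L := add_le_add (hAle x₁) (hAle x₂)
    _ = 2 * L := by ring
  -- refined bound
  have hintB : ∀ (B : Set (EuclideanSpace ℝ (Fin n))), volume B ≠ ⊤ → IntegrableOn g B volume :=
    fun B hB => steklov_g_int hf hB
  have hsplit : ∀ (x y : EuclideanSpace ℝ (Fin n)),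
      (volume (Metric.closedBall x r \ Metric.closedBall y r)).toReal
        ≤ (r + dist x y) ^ n * v - r ^ n * v := by
    intro x y
    have hsub : Metric.closedBall x r \ Metric.closedBall y r
        ⊆ Metric.closedBall y (r + dist x y) \ Metric.closedBall y r := by
      apply Set.diff_subset_diff_left
      exact Metric.closedBall_subset_closedBall' (by linarith [dist_comm x y])
    have hplus : Metric.closedBall y r ⊆ Metric.closedBall y (r + dist x y) :=
      Metric.closedBall_subset_closedBall (by linarith [dist_nonneg (x := x) (y := y)])
    have hde : volume (Metric.closedBall y (r + dist x y) \ Metric.closedBall y r)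
        = volume (Metric.closedBall y (r + dist x y)) - volume (Metric.closedBall y r) :=
      measure_diff hplus measurableSet_closedBall.nullMeasurableSet
        measure_closedBall_lt_top.ne
    have h1 : (volume (Metric.closedBall x r \ Metric.closedBall y r)).toReal
        ≤ (volume (Metric.closedBall y (r + dist x y) \ Metric.closedBall y r)).toReal := by
      apply ENNReal.toReal_mono _ (measure_mono hsub)
      rw [hde]
      exact (tsub_le_self.trans_lt measure_closedBall_lt_top).ne
    rw [hde, ENNReal.toReal_sub_of_le (measure_mono hplus) measure_closedBall_lt_top.ne,
      hcb y (r + dist x y) (by positivity), hcb y r hr.le] at h1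
    exact h1
  have hsd : ‖(∫ z in B₁, g z) - ∫ z in B₂, g z‖
      ≤ (L : ℝ) * ((volume (B₁ \ B₂)).toReal + (volume (B₂ \ B₁)).toReal) := by
    have hi1 : IntegrableOn g B₁ volume := hintB _ measure_closedBall_lt_top.ne
    have hi2 : IntegrableOn g B₂ volume := hintB _ measure_closedBall_lt_top.ne
    have e1 : (∫ z in B₁ ∩ B₂, g z) + ∫ z in B₁ \ B₂, g z = ∫ z in B₁, g z :=
      integral_inter_add_diff measurableSet_closedBall hi1
    have e2 : (∫ z in B₂ ∩ B₁, g z) + ∫ z in B₂ \ B₁, g z = ∫ z in B₂, g z :=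
      integral_inter_add_diff measurableSet_closedBall hi2
    have ecomm : B₁ ∩ B₂ = B₂ ∩ B₁ := Set.inter_comm _ _
    have e3 : (∫ z in B₁, g z) - ∫ z in B₂, g z
        = (∫ z in B₁ \ B₂, g z) - ∫ z in B₂ \ B₁, g z := by
      rw [← e1, ← e2, ecomm]; abel
    have b1 : ‖∫ z in B₁ \ B₂, g z‖ ≤ (L : ℝ) * (volume (B₁ \ B₂)).toReal :=
      norm_setIntegral_le_of_norm_le_const
        ((measure_mono Set.diff_subset).trans_lt measure_closedBall_lt_top)
        (fun z _ => hgbd z)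
    have b2 : ‖∫ z in B₂ \ B₁, g z‖ ≤ (L : ℝ) * (volume (B₂ \ B₁)).toReal :=
      norm_setIntegral_le_of_norm_le_const
        ((measure_mono Set.diff_subset).trans_lt measure_closedBall_lt_top)
        (fun z _ => hgbd z)
    calc ‖(∫ z in B₁, g z) - ∫ z in B₂, g z‖
        ≤ ‖∫ z in B₁ \ B₂, g z‖ + ‖∫ z in B₂ \ B₁, g z‖ := by rw [e3]; exact norm_sub_le _ _
    _ ≤ (L : ℝ) * (volume (B₁ \ B₂)).toReal + (L : ℝ) * (volume (B₂ \ B₁)).toReal :=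
        add_le_add b1 b2
    _ = (L : ℝ) * ((volume (B₁ \ B₂)).toReal + (volume (B₂ \ B₁)).toReal) := by ring
  have hdist : dist x₁ x₂ = d := by rw [dist_eq_norm]
  have hgood : ‖fderiv ℝ (steklovAvg n D f) x₁ - fderiv ℝ (steklovAvg n D f) x₂‖
      ≤ c⁻¹ * (2 * L * ((r + d) ^ n * v - r ^ n * v)) := by
    rw [hdiff, norm_smul, norm_inv, Real.norm_of_nonneg hcpos.le]
    have h1 := hsplit x₁ x₂
    have h2 := hsplit x₂ x₁
    rw [hdist] at h1
    rw [dist_comm, hdist] at h2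
    calc c⁻¹ * ‖(∫ z in B₁, g z) - ∫ z in B₂, g z‖
        ≤ c⁻¹ * ((L : ℝ) * ((volume (B₁ \ B₂)).toReal + (volume (B₂ \ B₁)).toReal)) := by
          gcongr
    _ ≤ c⁻¹ * ((L : ℝ) * (((r + d) ^ n * v - r ^ n * v) + ((r + d) ^ n * v - r ^ n * v))) := by
          gcongr
    _ = c⁻¹ * (2 * L * ((r + d) ^ n * v - r ^ n * v)) := by ring
  -- combine
  rcases le_or_gt d r with hcase | hcase
  · -- small distance: use refined bound
    have hpow : (r + d) ^ n - r ^ n ≤ (n : ℝ) * (2 * r) ^ (n - 1) * d := by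
      obtain ⟨m, rfl⟩ : ∃ m, n = m + 1 := ⟨n - 1, (Nat.succ_pred_eq_of_pos hn).symm⟩
      have h1 : (r + d) ^ (m + 1) - r ^ (m + 1) ≤ (m + 1 : ℝ) * (r + d) ^ m * (r + d - r) :=
        steklov_pow_aux m hr.le (by linarith)
      have h2 : (r + d) ^ m ≤ (2 * r) ^ m := pow_le_pow_left₀ (by linarith) (by linarith) m
      have hrd : r + d - r = d := by ring
      rw [hrd] at h1
      have h3 : ((m : ℝ) + 1) * (r + d) ^ m * d ≤ ((m : ℝ) + 1) * (2 * r) ^ m * d := by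
        apply mul_le_mul_of_nonneg_right _ hdnn
        apply mul_le_mul_of_nonneg_left h2 (by positivity)
      simp only [Nat.add_sub_cancel]
      push_cast
      linarith
    calc ‖fderiv ℝ (steklovAvg n D f) x₁ - fderiv ℝ (steklovAvg n D f) x₂‖
        ≤ c⁻¹ * (2 * L * ((r + d) ^ n * v - r ^ n * v)) := hgood
    _ = 2 * L / c * (((r + d) ^ n - r ^ n) * v) := by ring
    _ ≤ 2 * L / c * (((n : ℝ) * (2 * r) ^ (n - 1) * d) * v) := by
        have hLc : 0 ≤ 2 * (L:ℝ) / c := by positivity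
        apply mul_le_mul_of_nonneg_left _ hLc
        apply mul_le_mul_of_nonneg_right hpow hvnonneg
    _ = 2 * L / c * ((n : ℝ) * (2 * r) ^ (n - 1) * v) * d := by ring
    _ ≤ K * d := by
        apply mul_le_mul_of_nonneg_right (le_max_right _ _) hdnn
  · -- large distance: use trivial bound
    calc ‖fderiv ℝ (steklovAvg n D f) x₁ - fderiv ℝ (steklovAvg n D f) x₂‖
        ≤ 2 * L := htriv
    _ = 2 * L / r * r := by field_simp
    _ ≤ 2 * L / r * d := by
        apply mul_le_mul_of_nonneg_left hcase.le (by positivity)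
    _ ≤ K * d := mul_le_mul_of_nonneg_right (le_max_left _ _) hdnn
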